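/- arXiv:1611.04429 — 2 statements merged into one kernel-verified Lean document; each statement's English description precedes it below -/
import Mathlib

section
/- Let A be the GFDM matrix whose phase-shifted characteristic matrix Ḡ satisfies Ḡ_{k,l} = 1 for 0 ≤ l < ⌈M/2⌉ and Ḡ_{k,l} = e^{-2πi k/K} for ⌈M/2⌉ ≤ l < M (all 0 ≤ k < K). Then A is unitary. (This is the GFDM matrix of the Dirichlet pulse, whose D-point DFT g_f satisfies (g_f)_l = sqrt(K) for l ∈ {0,...,⌈(M-1)/2⌉-1+1} ∪ {D-⌈(M-1)/2⌉,...,D-1} appropriately and 0 otherwise.) -/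
set_option maxHeartbeats 1000000


open Complex Matrix BigOperators Kronecker

noncomputable section

namespace GFDM

/-- Normalized p-point DFT matrix. -/
def W (p : ℕ) : Matrix (Fin p) (Fin p) ℂ := fun m n =>
  Complex.exp (-2 * Real.pi * Complex.I * (m.val : ℂ) * (n.val : ℂ) / (p : ℂ)) / (Real.sqrt p : ℂ)

/-- Reshape a vector of length K*M into a K×M matrix, (k,m)-entry = g (k + m*K). -/
def reshape (K M : ℕ) (g : Fin (K * M) → ℂ) : Matrix (Fin K) (Fin M) ℂ := fun k m =>
  g ⟨k.val + m.val * K, by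
    have hm := m.isLt
    calc k.val + m.val * K < K + m.val * K := by omega
      _ = (m.val + 1) * K := by ring
      _ ≤ M * K := Nat.mul_le_mul_right K hm
      _ = K * M := Nat.mul_comm M K⟩

/-- Column-wise vectorization of a K×M matrix: (vec G) (k + m*K) = G k m. -/
def vec (K M : ℕ) (G : Matrix (Fin K) (Fin M) ℂ) : Fin (K * M) → ℂ := fun i =>
  G ⟨i.val % K, by
      have h := i.isLt
      rcases Nat.eq_zero_or_pos K with h0 | h0
      · subst h0; simp at h
      · exact Nat.mod_lt _ h0⟩
    ⟨i.val / K, Nat.div_lt_of_lt_mul i.isLt⟩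

/-- The characteristic matrix G = √D · reshape(g,K,M) · W_M. -/
def charMatrix (K M : ℕ) (g : Fin (K * M) → ℂ) : Matrix (Fin K) (Fin M) ℂ :=
  (Real.sqrt (K * M) : ℂ) • (reshape K M g * W M)

/-- Phase-shifted characteristic matrix: Ḡ_{k,m} = G_{k,m} e^{-2πi km/D}. -/
def phaseShift (K M : ℕ) (G : Matrix (Fin K) (Fin M) ℂ) : Matrix (Fin K) (Fin M) ℂ := fun k m =>
  G k m * Complex.exp (-2 * Real.pi * Complex.I * (k.val : ℂ) * (m.val : ℂ) / ((K * M : ℕ) : ℂ))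

/-- Index identification (m,k) ↦ k + K·m between Fin M × Fin K and Fin (K*M). -/
def idx (K M : ℕ) : Fin M × Fin K ≃ Fin (K * M) :=
  finProdFinEquiv.trans (finCongr (Nat.mul_comm M K))

/-- The GFDM matrix (W_M^H ⊗ I_K)·diag(vec G)·(W_M ⊗ W_K^H) built from a characteristic matrix G. -/
def gfdmOfChar (K M : ℕ) (G : Matrix (Fin K) (Fin M) ℂ) :
    Matrix (Fin (K * M)) (Fin (K * M)) ℂ :=
  Matrix.reindex (idx K M) (idx K M)
    (((W M)ᴴ ⊗ₖ (1 : Matrix (Fin K) (Fin K) ℂ)) *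
      Matrix.diagonal (fun p : Fin M × Fin K => G p.2 p.1) *
      (W M ⊗ₖ (W K)ᴴ))

/-- The GFDM matrix defined directly by its columns: the (k+mK)-th column has n-th entry
    g_{⟨n-mK⟩_D} e^{2πi kn/K}. -/
def gfdmMatrix (K M : ℕ) (g : Fin (K * M) → ℂ) : Matrix (Fin (K * M)) (Fin (K * M)) ℂ :=
  fun n c =>
    g ⟨(n.val + K * M - (c.val / K) * K) % (K * M), by
        have h := n.isLt
        rcases Nat.eq_zero_or_pos (K * M) with h0 | h0
        · omega
        · exact Nat.mod_lt _ h0⟩ *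
      Complex.exp (2 * Real.pi * Complex.I * ((c.val % K : ℕ) : ℂ) * (n.val : ℂ) / (K : ℂ))

/-- The permutation matrix Π with Π_{kM+m, nK+l} = δ_{kl} δ_{mn}. -/
def permPi (K M : ℕ) : Matrix (Fin (K * M)) (Fin (K * M)) ℂ := fun i j =>
  if i.val / M = j.val % K ∧ i.val % M = j.val / K then 1 else 0

/-- The index k + m·K as an element of Fin (K*M). -/
def vecIdx {K M : ℕ} (k : Fin K) (m : Fin M) : Fin (K * M) :=
  ⟨k.val + m.val * K, by
    have hm := m.isLt
    calc k.val + m.val * K < K + m.val * K := by omega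
      _ = (m.val + 1) * K := by ring
      _ ≤ M * K := Nat.mul_le_mul_right K hm
      _ = K * M := Nat.mul_comm M K⟩

/-- The index k·M + m as an element of Fin (K*M). -/
def rowIdx {K M : ℕ} (k : Fin K) (m : Fin M) : Fin (K * M) :=
  ⟨k.val * M + m.val, by
    have hk := k.isLt
    calc k.val * M + m.val < k.val * M + M := by omega
      _ = (k.val + 1) * M := by ring
      _ ≤ K * M := Nat.mul_le_mul_right M hk⟩


lemma dft_sum (p : ℕ) (hp : 0 < p) (a b : Fin p) :
    ∑ m : Fin p, Complex.exp ((m.val : ℂ) * (2 * Real.pi * I * ((a.val : ℂ) - (b.val : ℂ)) / p)) =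
      if a = b then (p : ℂ) else 0 := by
  set w : ℂ := 2 * Real.pi * I * ((a.val : ℂ) - (b.val : ℂ)) / p with hw
  have hpow : ∀ m : ℕ, Complex.exp ((m : ℂ) * w) = Complex.exp w ^ m := fun m => by
    rw [← Complex.exp_nat_mul]
  simp_rw [hpow]
  rw [Fin.sum_univ_eq_sum_range (fun m => Complex.exp w ^ m) p]
  by_cases h : a = b
  · subst h
    simp [hw]
  · rw [if_neg h]
    have hp' : (p : ℂ) ≠ 0 := Nat.cast_ne_zero.mpr hp.ne'
    have hzp : Complex.exp w ^ p = 1 := by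
      rw [← Complex.exp_nat_mul]
      have he : (p : ℂ) * w = (((a.val : ℤ) - (b.val : ℤ)) : ℂ) * (2 * Real.pi * I) := by
        rw [hw, mul_comm ((p:ℂ)), div_mul_cancel₀ _ hp']
        push_cast; ring
      rw [he]
      have h4 := Complex.exp_int_mul_two_pi_mul_I ((a.val:ℤ) - (b.val:ℤ))
      push_cast at h4
      exact h4
    have hne : Complex.exp w ≠ 1 := by
      intro hone
      rw [Complex.exp_eq_one_iff] at hone
      obtain ⟨n, hn⟩ := hone
      rw [hw] at hn
      have h2 : (2 * (Real.pi : ℂ) * I) ≠ 0 := by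
        simp [Real.pi_ne_zero, Complex.I_ne_zero, Complex.ofReal_ne_zero]
      have hc : ((a.val : ℂ) - (b.val : ℂ)) = (n : ℂ) * p := by
        have hn2 : (2 * (Real.pi : ℂ) * I) * ((a.val : ℂ) - (b.val : ℂ)) =
            (2 * (Real.pi : ℂ) * I) * ((n : ℂ) * p) := by
          have h3 := congrArg (fun z => z * (p : ℂ)) hn
          simp only [div_mul_cancel₀ _ hp'] at h3
          rw [← sub_eq_zero] at h3 ⊢
          rw [← h3]; ring
        exact mul_left_cancel₀ h2 hn2
      have hz : (a.val : ℤ) - (b.val : ℤ) = n * p := by exact_mod_cast hc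
      have ha := a.isLt; have hb := b.isLt
      have hab : a.val ≠ b.val := fun hh => h (Fin.ext hh)
      rcases lt_trichotomy n 0 with hn0 | hn0 | hn0
      · have : n * (p : ℤ) ≤ -p := by nlinarith [Int.ofNat_lt.mpr hp]
        have hbp : ((b.val : ℤ)) < p := by exact_mod_cast hb
        omega
      · subst hn0; simp at hz; omega
      · have : (p : ℤ) ≤ n * p := by nlinarith [Int.ofNat_lt.mpr hp]
        have hap : ((a.val : ℤ)) < p := by exact_mod_cast ha
        omega
    rw [geom_sum_eq hne, hzp, sub_self, zero_div]


lemma W_mem (p : ℕ) (hp : 0 < p) : W p ∈ Matrix.unitaryGroup (Fin p) ℂ := by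
  rw [Matrix.mem_unitaryGroup_iff']
  ext a b
  rw [Matrix.mul_apply, Matrix.one_apply]
  have hp' : (p : ℂ) ≠ 0 := Nat.cast_ne_zero.mpr hp.ne'
  have hsq : ((Real.sqrt p : ℝ) : ℂ) * ((Real.sqrt p : ℝ) : ℂ) = (p : ℂ) := by
    rw [← Complex.ofReal_mul, Real.mul_self_sqrt (Nat.cast_nonneg p)]
    simp
  have key : ∀ m : Fin p, (star (W p) : Matrix (Fin p) (Fin p) ℂ) a m * W p m b
      = Complex.exp ((m.val : ℂ) * (2 * Real.pi * I * ((a.val : ℂ) - (b.val : ℂ)) / p)) / p := by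
    intro m
    have hstar : (star (W p) : Matrix (Fin p) (Fin p) ℂ) a m = star (W p m a) := rfl
    rw [hstar]
    simp only [W, star_div₀]
    have hse : star (Complex.exp (-2 * Real.pi * Complex.I * (m.val : ℂ) * (a.val : ℂ) / (p : ℂ)))
        = Complex.exp (2 * Real.pi * Complex.I * (m.val : ℂ) * (a.val : ℂ) / (p : ℂ)) := by
      rw [Complex.star_def, ← Complex.exp_conj]
      congr 1
      simp only [map_div₀, _root_.map_mul, _root_.map_neg, map_ofNat, Complex.conj_ofReal,
        Complex.conj_I, map_natCast]
      ring
    have hss : star ((Real.sqrt p : ℝ) : ℂ) = ((Real.sqrt p : ℝ) : ℂ) := by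
      rw [Complex.star_def, Complex.conj_ofReal]
    rw [hse, hss, div_mul_div_comm, ← Complex.exp_add, hsq]
    congr 1
    ring
  rw [Finset.sum_congr rfl (fun m _ => key m), ← Finset.sum_div, dft_sum p hp a b]
  by_cases h : a = b
  · rw [if_pos h, if_pos h, div_self hp']
  · rw [if_neg h, if_neg h, zero_div]


def permEquiv (K M : ℕ) (hK : 0 < K) (hM : 0 < M) : Fin (K * M) ≃ Fin (K * M) where
  toFun i := ⟨(i.val % M) * K + i.val / M, by
    have h1 : i.val % M < M := Nat.mod_lt _ hM
    have h2 : i.val / M < K := Nat.div_lt_of_lt_mul (lt_of_lt_of_le i.isLt (le_of_eq (Nat.mul_comm K M)))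
    calc (i.val % M) * K + i.val / M < (i.val % M) * K + K := by omega
      _ = (i.val % M + 1) * K := by ring
      _ ≤ M * K := Nat.mul_le_mul_right K h1
      _ = K * M := Nat.mul_comm M K⟩
  invFun j := ⟨(j.val % K) * M + j.val / K, by
    have h1 : j.val % K < K := Nat.mod_lt _ hK
    have h2 : j.val / K < M := Nat.div_lt_of_lt_mul j.isLt
    calc (j.val % K) * M + j.val / K < (j.val % K) * M + M := by omega
      _ = (j.val % K + 1) * M := by ring
      _ ≤ K * M := Nat.mul_le_mul_right M h1⟩
  left_inv i := by
    apply Fin.ext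
    show (((i.val % M) * K + i.val / M) % K) * M + ((i.val % M) * K + i.val / M) / K = i.val
    have h2 : i.val / M < K := Nat.div_lt_of_lt_mul (lt_of_lt_of_le i.isLt (le_of_eq (Nat.mul_comm K M)))
    have e1 : ((i.val % M) * K + i.val / M) % K = i.val / M := by
      rw [Nat.add_comm, Nat.add_mul_mod_self_right, Nat.mod_eq_of_lt h2]
    have e2 : ((i.val % M) * K + i.val / M) / K = i.val % M := by
      rw [Nat.add_comm, Nat.add_mul_div_right _ _ hK, Nat.div_eq_of_lt h2, Nat.zero_add]
    rw [e1, e2, Nat.mul_comm]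
    exact Nat.div_add_mod i.val M
  right_inv j := by
    apply Fin.ext
    show (((j.val % K) * M + j.val / K) % M) * K + ((j.val % K) * M + j.val / K) / M = j.val
    have h2 : j.val / K < M := Nat.div_lt_of_lt_mul j.isLt
    have e1 : ((j.val % K) * M + j.val / K) % M = j.val / K := by
      rw [Nat.add_comm, Nat.add_mul_mod_self_right, Nat.mod_eq_of_lt h2]
    have e2 : ((j.val % K) * M + j.val / K) / M = j.val % K := by
      rw [Nat.add_comm, Nat.add_mul_div_right _ _ hM, Nat.div_eq_of_lt h2, Nat.zero_add]
    rw [e1, e2, Nat.mul_comm]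
    exact Nat.div_add_mod j.val K

lemma permPi_eq (K M : ℕ) (hK : 0 < K) (hM : 0 < M) :
    permPi K M = (1 : Matrix (Fin (K * M)) (Fin (K * M)) ℂ).submatrix (permEquiv K M hK hM) id := by
  ext i j
  rw [permPi, Matrix.submatrix_apply, id, Matrix.one_apply]
  have hcond : (i.val / M = j.val % K ∧ i.val % M = j.val / K) ↔ permEquiv K M hK hM i = j := by
    constructor
    · rintro ⟨h1, h2⟩
      apply Fin.ext
      show (i.val % M) * K + i.val / M = j.val
      rw [h1, h2, Nat.mul_comm]
      exact Nat.div_add_mod j.val K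
    · rintro rfl
      have h2 : i.val / M < K := Nat.div_lt_of_lt_mul (lt_of_lt_of_le i.isLt (le_of_eq (Nat.mul_comm K M)))
      constructor
      · show i.val / M = ((i.val % M) * K + i.val / M) % K
        rw [Nat.add_comm, Nat.add_mul_mod_self_right, Nat.mod_eq_of_lt h2]
      · show i.val % M = ((i.val % M) * K + i.val / M) / K
        rw [Nat.add_comm, Nat.add_mul_div_right _ _ hK, Nat.div_eq_of_lt h2, Nat.zero_add]
  by_cases h : i.val / M = j.val % K ∧ i.val % M = j.val / K
  · rw [if_pos h, if_pos (hcond.mp h)]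
  · rw [if_neg h, if_neg (fun hh => h (hcond.mpr hh))]

lemma permPi_mem (K M : ℕ) (hK : 0 < K) (hM : 0 < M) :
    permPi K M ∈ Matrix.unitaryGroup (Fin (K * M)) ℂ := by
  rw [Matrix.mem_unitaryGroup_iff', permPi_eq K M hK hM]
  set σ := permEquiv K M hK hM
  have h1 : (1 : Matrix (Fin (K * M)) (Fin (K * M)) ℂ).submatrix (⇑σ) id
      = (1 : Matrix (Fin (K * M)) (Fin (K * M)) ℂ).submatrix (⇑σ) (⇑(Equiv.refl (Fin (K * M)))) :=
    rfl
  rw [Matrix.star_eq_conjTranspose, Matrix.conjTranspose_submatrix, Matrix.conjTranspose_one]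
  have := Matrix.submatrix_mul_equiv (1 : Matrix (Fin (K * M)) (Fin (K * M)) ℂ)
    (1 : Matrix (Fin (K * M)) (Fin (K * M)) ℂ) id σ id
  rw [this, Matrix.one_mul, Matrix.submatrix_id_id]


lemma kron_conjTranspose {a b c d : Type*} [Fintype a] [Fintype b] [Fintype c] [Fintype d]
    (A : Matrix a b ℂ) (B : Matrix c d ℂ) : (A ⊗ₖ B)ᴴ = Aᴴ ⊗ₖ Bᴴ := by
  ext i j
  simp [Matrix.conjTranspose_apply, Matrix.kroneckerMap_apply, star_mul']

lemma kron_mem {a b : Type*} [Fintype a] [DecidableEq a] [Fintype b] [DecidableEq b]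
    {A : Matrix a a ℂ} {B : Matrix b b ℂ}
    (hA : A ∈ Matrix.unitaryGroup a ℂ) (hB : B ∈ Matrix.unitaryGroup b ℂ) :
    A ⊗ₖ B ∈ Matrix.unitaryGroup (a × b) ℂ := by
  rw [Matrix.mem_unitaryGroup_iff'] at hA hB ⊢
  rw [Matrix.star_eq_conjTranspose] at hA hB ⊢
  rw [kron_conjTranspose, ← Matrix.mul_kronecker_mul, hA, hB, Matrix.one_kronecker_one]

lemma diag_mem {n : Type*} [Fintype n] [DecidableEq n] (d : n → ℂ)
    (hd : ∀ i, star (d i) * d i = 1) :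
    Matrix.diagonal d ∈ Matrix.unitaryGroup n ℂ := by
  rw [Matrix.mem_unitaryGroup_iff', Matrix.star_eq_conjTranspose,
    Matrix.diagonal_conjTranspose, Matrix.diagonal_mul_diagonal]
  have : (fun i => star d i * d i) = fun _ : n => (1 : ℂ) := by
    funext i
    exact hd i
  rw [this]
  exact Matrix.diagonal_one

lemma reindex_mem {n m : Type*} [Fintype n] [DecidableEq n] [Fintype m] [DecidableEq m]
    (e : n ≃ m) {A : Matrix n n ℂ} (hA : A ∈ Matrix.unitaryGroup n ℂ) :
    Matrix.reindex e e A ∈ Matrix.unitaryGroup m ℂ := by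
  rw [Matrix.mem_unitaryGroup_iff'] at hA ⊢
  rw [Matrix.star_eq_conjTranspose] at hA ⊢
  rw [Matrix.reindex_apply, Matrix.conjTranspose_submatrix, Matrix.submatrix_mul_equiv, hA,
    Matrix.submatrix_one_equiv]


theorem stmt16 (K M : ℕ) (hK : 0 < K) (hM : 0 < M) :
    (W (K * M))ᴴ * permPi K M *
        Matrix.reindex (idx K M) (idx K M)
          (((1 : Matrix (Fin M) (Fin M) ℂ) ⊗ₖ W K) *
            Matrix.diagonal (fun p : Fin M × Fin K =>
              if (p.1 : ℕ) < (M + 1) / 2 then 1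
              else Complex.exp (-2 * Real.pi * Complex.I * (p.2.val : ℂ) / (K : ℂ))) *
            (W M ⊗ₖ (W K)ᴴ)) ∈ Matrix.unitaryGroup (Fin (K * M)) ℂ := by
  have hKM : 0 < K * M := Nat.mul_pos hK hM
  have hWD : (W (K * M))ᴴ ∈ Matrix.unitaryGroup (Fin (K * M)) ℂ := by
    have := Unitary.star_mem (W_mem (K * M) hKM)
    rwa [Matrix.star_eq_conjTranspose] at this
  have hWK := W_mem K hK
  have hWM := W_mem M hM
  have hWKH : (W K)ᴴ ∈ Matrix.unitaryGroup (Fin K) ℂ := by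
    have := Unitary.star_mem hWK
    rwa [Matrix.star_eq_conjTranspose] at this
  have hkron1 : ((1 : Matrix (Fin M) (Fin M) ℂ) ⊗ₖ W K) ∈
      Matrix.unitaryGroup (Fin M × Fin K) ℂ := kron_mem (one_mem _) hWK
  have hkron2 : (W M ⊗ₖ (W K)ᴴ) ∈ Matrix.unitaryGroup (Fin M × Fin K) ℂ := kron_mem hWM hWKH
  have hdiag : Matrix.diagonal (fun p : Fin M × Fin K =>
      if (p.1 : ℕ) < (M + 1) / 2 then (1 : ℂ)
      else Complex.exp (-2 * Real.pi * Complex.I * (p.2.val : ℂ) / (K : ℂ))) ∈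
      Matrix.unitaryGroup (Fin M × Fin K) ℂ := by
    apply diag_mem
    intro p
    by_cases h : (p.1 : ℕ) < (M + 1) / 2
    · simp [h]
    · rw [if_neg h, Complex.star_def, ← Complex.exp_conj, ← Complex.exp_add]
      have hc : (starRingEnd ℂ) (-2 * Real.pi * Complex.I * (p.2.val : ℂ) / (K : ℂ)) =
          -(-2 * Real.pi * Complex.I * (p.2.val : ℂ) / (K : ℂ)) := by
        simp only [map_div₀, _root_.map_mul, _root_.map_neg, map_ofNat, Complex.conj_ofReal,
          Complex.conj_I, map_natCast]
        ring
      rw [hc, neg_add_cancel, Complex.exp_zero]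
  exact mul_mem (mul_mem hWD (permPi_mem K M hK hM))
    (reindex_mem _ (mul_mem (mul_mem hkron1 hdiag) hkron2))

end GFDM
end
end

section
/- Let A be a unitary D×D matrix (D = KM), C = W_D^H·D_C·W_D with D_C a diagonal matrix with nonzero diagonal entries C_0,...,C_{D-1}, and γ > 0. Then the MMSE matrix B = A^H C^H (C A A^H C^H + γ^{-1} I_D)^{-1} equals A^{-1}·C^{-1}·W_D^H·diag(|C_0|²/(|C_0|²+γ^{-1}),...,|C_{D-1}|²/(|C_{D-1}|²+γ^{-1}))·W_D; equivalently B = [C A + γ^{-1}(C A)^{-H}]^{-1} and B = A^H·W_D^H·diag(C_l^*/(|C_l|²+γ^{-1}))_l·W_D. -/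
open Complex Matrix BigOperators Kronecker

noncomputable section

namespace GFDM

lemma W_mul_conjTranspose (p : ℕ) (hp : 0 < p) : W p * (W p)ᴴ = 1 := by
  have hp0 : (p : ℂ) ≠ 0 := Nat.cast_ne_zero.mpr hp.ne'
  have hsq : (Real.sqrt p : ℂ) * (Real.sqrt p : ℂ) = (p : ℂ) := by
    rw [← Complex.ofReal_mul, Real.mul_self_sqrt (Nat.cast_nonneg p)]
    norm_num
  ext m n
  simp only [Matrix.mul_apply, Matrix.conjTranspose_apply, W, Matrix.one_apply]
  set ζ : ℂ := Complex.exp (2 * Real.pi * Complex.I * ((n.val : ℂ) - (m.val : ℂ)) / p) with hζ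
  have hterm : ∀ j : Fin p,
      Complex.exp (-2 * Real.pi * Complex.I * (m.val : ℂ) * (j.val : ℂ) / p) / (Real.sqrt p : ℂ) *
        star (Complex.exp (-2 * Real.pi * Complex.I * (n.val : ℂ) * (j.val : ℂ) / p) / (Real.sqrt p : ℂ))
      = ζ ^ (j : ℕ) / p := by
    intro j
    have hconj : star (Complex.exp (-2 * Real.pi * Complex.I * (n.val : ℂ) * (j.val : ℂ) / p) / (Real.sqrt p : ℂ))
        = Complex.exp (2 * Real.pi * Complex.I * (n.val : ℂ) * (j.val : ℂ) / p) / (Real.sqrt p : ℂ) := by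
      simp only [Complex.star_def, map_div₀, ← Complex.exp_conj, Complex.conj_ofReal]
      congr 2
      simp only [map_div₀, _root_.map_mul, map_neg, map_ofNat, Complex.conj_I, Complex.conj_ofReal,
        map_natCast]
      ring
    have harg : -2 * (Real.pi : ℂ) * Complex.I * (m.val : ℂ) * (j.val : ℂ) / p +
        2 * (Real.pi : ℂ) * Complex.I * (n.val : ℂ) * (j.val : ℂ) / p
        = (j.val : ℂ) * (2 * Real.pi * Complex.I * ((n.val : ℂ) - (m.val : ℂ)) / p) := by
      field_simp
      ring
    rw [hconj, div_mul_div_comm, hsq, ← Complex.exp_add, harg, Complex.exp_nat_mul, hζ]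
  rw [Finset.sum_congr rfl (fun j _ => hterm j), ← Finset.sum_div]
  by_cases hmn : m = n
  · subst hmn
    simp only [if_pos rfl, hζ, sub_self, mul_zero, zero_div, Complex.exp_zero, one_pow]
    simp [Finset.card_univ, hp0]
  · rw [if_neg hmn]
    have h3 : 2 * (Real.pi : ℂ) * Complex.I ≠ 0 := by
      simp [Complex.I_ne_zero, Complex.ofReal_ne_zero, Real.pi_ne_zero]
    have hz1 : ζ ≠ 1 := by
      intro h
      rw [hζ, Complex.exp_eq_one_iff] at h
      obtain ⟨k, hk⟩ := h
      rw [div_eq_iff hp0] at hk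
      have h2 : ((n.val : ℂ) - (m.val : ℂ)) = (k : ℂ) * p := by
        apply mul_left_cancel₀ h3
        linear_combination hk
      have h4 : ((n.val : ℤ) - (m.val : ℤ)) = k * p := by exact_mod_cast h2
      have hne : (n.val : ℤ) ≠ m.val := by
        simpa using fun h => hmn (Fin.ext h.symm)
      have hm := m.isLt
      have hn := n.isLt
      have habs : |(n.val : ℤ) - (m.val : ℤ)| < p := by rw [abs_lt]; omega
      have h0 : ((n.val : ℤ) - (m.val : ℤ)) = 0 :=
        Int.eq_zero_of_abs_lt_dvd ⟨k, by rw [h4, mul_comm]⟩ habs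
      omega
    have hzp : ζ ^ p = 1 := by
      rw [hζ, ← Complex.exp_nat_mul]
      have he : (p : ℂ) * (2 * Real.pi * Complex.I * ((n.val : ℂ) - (m.val : ℂ)) / p)
          = (((n.val : ℤ) - (m.val : ℤ) : ℤ) : ℂ) * (2 * Real.pi * Complex.I) := by
        push_cast
        field_simp
      rw [he, Complex.exp_int_mul_two_pi_mul_I]
    rw [Fin.sum_univ_eq_sum_range (fun j => ζ ^ j) p, geom_sum_eq hz1, hzp, sub_self, zero_div,
      zero_div]


lemma W_unitary' (p : ℕ) (hp : 0 < p) : (W p)ᴴ * W p = 1 :=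
  mul_eq_one_comm.mp (W_mul_conjTranspose p hp)

theorem stmt18 (K M : ℕ) (hK : 0 < K) (hM : 0 < M)
    (A : Matrix (Fin (K * M)) (Fin (K * M)) ℂ)
    (hA : A ∈ Matrix.unitaryGroup (Fin (K * M)) ℂ)
    (c : Fin (K * M) → ℂ) (hc : ∀ l, c l ≠ 0) (γ : ℝ) (hγ : 0 < γ) :
    let C := (W (K * M))ᴴ * Matrix.diagonal c * W (K * M)
    let B := Aᴴ * Cᴴ * (C * A * Aᴴ * Cᴴ + (γ : ℂ)⁻¹ • (1 : Matrix (Fin (K * M)) (Fin (K * M)) ℂ))⁻¹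
    B = A⁻¹ * C⁻¹ * (W (K * M))ᴴ *
          Matrix.diagonal (fun l =>
            ((‖c l‖ ^ 2 / (‖c l‖ ^ 2 + γ⁻¹) : ℝ) : ℂ)) *
          W (K * M) ∧
      B = (C * A + (γ : ℂ)⁻¹ • ((C * A)⁻¹)ᴴ)⁻¹ ∧
      B = Aᴴ * (W (K * M))ᴴ *
            Matrix.diagonal (fun l =>
              star (c l) / (((‖c l‖ ^ 2 : ℝ) : ℂ) + (γ : ℂ)⁻¹)) *
            W (K * M) := by

  intro C B
  have hD0 : 0 < K * M := Nat.mul_pos hK hM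
  have hU2 : W (K * M) * (W (K * M))ᴴ = 1 := W_mul_conjTranspose _ hD0
  have hU1 : (W (K * M))ᴴ * W (K * M) = 1 := W_unitary' _ hD0
  set U : Matrix (Fin (K * M)) (Fin (K * M)) ℂ := W (K * M) with hUdef
  -- F-calculus
  have F : ∀ d e : Fin (K * M) → ℂ, (Uᴴ * Matrix.diagonal d * U) * (Uᴴ * Matrix.diagonal e * U)
      = Uᴴ * Matrix.diagonal (fun l => d l * e l) * U := by
    intro d e
    simp only [Matrix.mul_assoc]
    rw [← Matrix.mul_assoc U Uᴴ, hU2, Matrix.one_mul,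
      ← Matrix.mul_assoc (Matrix.diagonal d) (Matrix.diagonal e) U,
      Matrix.diagonal_mul_diagonal]
  have Fadd : ∀ d e : Fin (K * M) → ℂ, (Uᴴ * Matrix.diagonal d * U) + (Uᴴ * Matrix.diagonal e * U)
      = Uᴴ * Matrix.diagonal (fun l => d l + e l) * U := by
    intro d e
    rw [← Matrix.add_mul, ← Matrix.mul_add, Matrix.diagonal_add]
  have Finv : ∀ d : Fin (K * M) → ℂ, (∀ l, d l ≠ 0) →
      (Uᴴ * Matrix.diagonal d * U)⁻¹ = Uᴴ * Matrix.diagonal (fun l => (d l)⁻¹) * U := by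
    intro d hd
    apply Matrix.inv_eq_right_inv
    rw [F]
    have h1 : (fun l => d l * (d l)⁻¹) = fun _ => (1 : ℂ) :=
      funext fun l => mul_inv_cancel₀ (hd l)
    rw [h1, Matrix.diagonal_one, Matrix.mul_one, hU1]
  have FH : ∀ d : Fin (K * M) → ℂ, (Uᴴ * Matrix.diagonal d * U)ᴴ
      = Uᴴ * Matrix.diagonal (fun l => star (d l)) * U := by
    intro d
    rw [Matrix.conjTranspose_mul, Matrix.conjTranspose_mul, Matrix.conjTranspose_conjTranspose,
      Matrix.diagonal_conjTranspose, ← Matrix.mul_assoc]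
    rfl
  have Fsmul : ∀ (x : ℂ) (d : Fin (K * M) → ℂ), x • (Uᴴ * Matrix.diagonal d * U)
      = Uᴴ * Matrix.diagonal (fun l => x * d l) * U := by
    intro x d
    rw [show Matrix.diagonal (fun l => x * d l) = x • Matrix.diagonal d by
        rw [← Matrix.diagonal_smul]; rfl,
      Matrix.mul_smul, Matrix.smul_mul]
  have smul1 : (γ : ℂ)⁻¹ • (1 : Matrix (Fin (K * M)) (Fin (K * M)) ℂ)
      = Uᴴ * Matrix.diagonal (fun _ => (γ : ℂ)⁻¹) * U := by
    rw [← Matrix.smul_one_eq_diagonal, Matrix.mul_smul, Matrix.smul_mul, Matrix.mul_one, hU1]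
  -- unitary A
  have hAA : A * Aᴴ = 1 := by
    have h := (Matrix.mem_unitaryGroup_iff).mp hA
    simpa [Matrix.star_eq_conjTranspose] using h
  have hAinv : A⁻¹ = Aᴴ := Matrix.inv_eq_right_inv hAA
  -- scalar bookkeeping
  have hγ0 : γ⁻¹ ≠ 0 := inv_ne_zero hγ.ne'
  set s : Fin (K * M) → ℂ := fun l => c l * star (c l) + (γ : ℂ)⁻¹ with hsdef
  have habs : ∀ l, ((‖c l‖ ^ 2 : ℝ) : ℂ) = c l * star (c l) := by
    intro l
    rw [Complex.sq_norm]
    exact (Complex.mul_conj _).symm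
  have hs : ∀ l, s l = ((‖c l‖ ^ 2 + γ⁻¹ : ℝ) : ℂ) := by
    intro l
    rw [hsdef, Complex.ofReal_add, habs l, Complex.ofReal_inv]
  have hs0 : ∀ l, s l ≠ 0 := by
    intro l
    rw [hs l, Complex.ofReal_ne_zero]
    positivity
  -- identify C, Cᴴ, the middle matrix, and B
  have hC : C = Uᴴ * Matrix.diagonal c * U := rfl
  have hCH : Cᴴ = Uᴴ * Matrix.diagonal (fun l => star (c l)) * U := FH c
  have hCinv : C⁻¹ = Uᴴ * Matrix.diagonal (fun l => (c l)⁻¹) * U := by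
    rw [hC, Finv c hc]
  have hMid : C * A * Aᴴ * Cᴴ + (γ : ℂ)⁻¹ • (1 : Matrix (Fin (K * M)) (Fin (K * M)) ℂ)
      = Uᴴ * Matrix.diagonal s * U := by
    rw [Matrix.mul_assoc C A Aᴴ, hAA, Matrix.mul_one, hC, hCH, F, smul1, Fadd]
  have hB : B = Aᴴ * (Uᴴ * Matrix.diagonal (fun l => star (c l) * (s l)⁻¹) * U) := by
    show Aᴴ * Cᴴ * _ = _
    rw [hMid, Finv s hs0, hCH, Matrix.mul_assoc, F]
  refine ⟨?_, ?_, ?_⟩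
  · -- first form
    calc B = Aᴴ * ((Uᴴ * Matrix.diagonal (fun l => (c l)⁻¹) * U) *
        (Uᴴ * Matrix.diagonal (fun l =>
          ((‖c l‖ ^ 2 / (‖c l‖ ^ 2 + γ⁻¹) : ℝ) : ℂ)) * U)) := by
          have hfun : (fun l => (c l)⁻¹ *
              ((‖c l‖ ^ 2 / (‖c l‖ ^ 2 + γ⁻¹) : ℝ) : ℂ))
              = fun l => star (c l) * (s l)⁻¹ := by
            funext l
            have hd0 : (‖c l‖ ^ 2 + γ⁻¹ : ℝ) ≠ 0 := by positivity
            rw [Complex.ofReal_div, habs l,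
              show ((‖c l‖ ^ 2 + γ⁻¹ : ℝ) : ℂ) = s l from (hs l).symm]
            field_simp [hc l, hs0 l]
          rw [hB, F, hfun]
      _ = _ := by
          rw [hAinv, hCinv]
          simp only [Matrix.mul_assoc]
  · -- second form
    set t : Fin (K * M) → ℂ := fun l => c l + (γ : ℂ)⁻¹ * (star (c l))⁻¹ with htdef
    have hst : ∀ l, star (c l) ≠ 0 := fun l => star_ne_zero.mpr (hc l)
    have hts : ∀ l, t l * star (c l) = s l := by
      intro l
      show (c l + (γ : ℂ)⁻¹ * (star (c l))⁻¹) * star (c l) = c l * star (c l) + (γ : ℂ)⁻¹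
      rw [add_mul, mul_assoc, inv_mul_cancel₀ (hst l), mul_one]
    have ht0 : ∀ l, t l ≠ 0 := by
      intro l h
      exact hs0 l (by rw [← hts l, h, zero_mul])
    have htinv : ∀ l, (t l)⁻¹ = star (c l) * (s l)⁻¹ := by
      intro l
      rw [← hts l, mul_inv, mul_comm ((t l)⁻¹) ((star (c l))⁻¹), ← mul_assoc,
        mul_inv_cancel₀ (hst l), one_mul]
    have hCA : C * A + (γ : ℂ)⁻¹ • ((C * A)⁻¹)ᴴ = (Uᴴ * Matrix.diagonal t * U) * A := by
      rw [Matrix.mul_inv_rev, hAinv, hCinv, Matrix.conjTranspose_mul,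
        Matrix.conjTranspose_conjTranspose, FH, ← Matrix.smul_mul, Fsmul, hC, ← Matrix.add_mul,
        Fadd]
      have hfun : (fun l => c l + (γ : ℂ)⁻¹ * star ((c l)⁻¹)) = t := by
        funext l
        rw [star_inv₀]
      rw [hfun]
    have hfun : (fun l => (t l)⁻¹) = fun l => star (c l) * (s l)⁻¹ :=
      funext fun l => htinv l
    rw [hCA, Matrix.mul_inv_rev, hAinv, Finv t ht0, hfun, hB]
  · -- third form
    have hfun : (fun l => star (c l) * (s l)⁻¹)
        = fun l => star (c l) / (((‖c l‖ ^ 2 : ℝ) : ℂ) + (γ : ℂ)⁻¹) := by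
      funext l
      rw [div_eq_mul_inv]
      congr 1
      rw [hs l]
      push_cast
      ring
    rw [hB, hfun, ← Matrix.mul_assoc, ← Matrix.mul_assoc]


end GFDM
end
end
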